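/- Fix λ ≠ 0. The functions X(ξ,η) = η + ln|(−ξβ₀ + 2λ + (γ₀−λ)ξe^{δ₀/λ})/(−ξβ₀ + 2λ + (γ₀+λ)ξe^{δ₀/λ})|, γ(ξ) = γ₀ + ξ(γ₀²−λ²)e^{δ₀/λ}/(−ξβ₀+2λ), δ(ξ) = λ ln|4λ²e^{δ₀/λ}/((−ξβ₀+2λ+(γ₀+λ)ξe^{δ₀/λ})(−ξβ₀+2λ+(γ₀−λ)ξe^{δ₀/λ}))|, β(ξ) = 2λβ₀/(−ξβ₀+2λ), and m(ξ) = m₀(−ξβ₀+2λ+(γ₀−λ)ξe^{δ₀/λ})²(−ξβ₀+2λ+(γ₀+λ)ξe^{δ₀/λ})²/(−ξβ₀+2λ)⁴ solve the ODE system ∂X/∂ξ = −e^{δ/λ}, ∂m/∂ξ = (2/λ)γ e^{δ/λ} m, ∂γ/∂ξ = −(1/(2λ))e^{δ/λ}(λ² − γ²), ∂δ/∂ξ = β − γe^{δ/λ}, ∂β/∂ξ = (1/(2λ))β², with initial values X(0)=η, m(0)=m₀, γ(0)=γ₀, δ(0)=δ₀, β(0)=β₀, on the maximal interval of ξ where the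 denominators are nonzero and positive where needed. -/

import Mathlib

noncomputable section

/-- A(ξ) = -ξβ₀ + 2λ -/
def chA (lam β₀ : ℝ) (ξ : ℝ) : ℝ := -ξ * β₀ + 2 * lam

/-- D₊(ξ) = -ξβ₀ + 2λ + (γ₀+λ)ξ e^{δ₀/λ} -/
def chDp (lam β₀ γ₀ δ₀ : ℝ) (ξ : ℝ) : ℝ :=
  chA lam β₀ ξ + (γ₀ + lam) * ξ * Real.exp (δ₀ / lam)

/-- D₋(ξ) = -ξβ₀ + 2λ + (γ₀-λ)ξ e^{δ₀/λ} -/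
def chDm (lam β₀ γ₀ δ₀ : ℝ) (ξ : ℝ) : ℝ :=
  chA lam β₀ ξ + (γ₀ - lam) * ξ * Real.exp (δ₀ / lam)

/-- X(ξ) -/
def chX (lam β₀ γ₀ δ₀ η : ℝ) (ξ : ℝ) : ℝ :=
  η + Real.log |chDm lam β₀ γ₀ δ₀ ξ / chDp lam β₀ γ₀ δ₀ ξ|

/-- γ(ξ) -/
def chGamma (lam β₀ γ₀ δ₀ : ℝ) (ξ : ℝ) : ℝ :=
  γ₀ + ξ * (γ₀ ^ 2 - lam ^ 2) * Real.exp (δ₀ / lam) / chA lam β₀ ξ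

/-- δ(ξ) -/
def chDelta (lam β₀ γ₀ δ₀ : ℝ) (ξ : ℝ) : ℝ :=
  lam * Real.log |4 * lam ^ 2 * Real.exp (δ₀ / lam)
    / (chDp lam β₀ γ₀ δ₀ ξ * chDm lam β₀ γ₀ δ₀ ξ)|

/-- β(ξ) -/
def chBeta (lam β₀ : ℝ) (ξ : ℝ) : ℝ := 2 * lam * β₀ / chA lam β₀ ξ

/-- m(ξ) -/
def chM (lam β₀ γ₀ δ₀ m₀ : ℝ) (ξ : ℝ) : ℝ :=
  m₀ * (chDm lam β₀ γ₀ δ₀ ξ) ^ 2 * (chDp lam β₀ γ₀ δ₀ ξ) ^ 2 / (chA lam β₀ ξ) ^ 4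

/-- the explicit formulas solve the flow ODE system of the nonlocal
symmetry in the Camassa--Holm case, with the given initial values, wherever the
denominators are nonzero (and positive where needed). -/
theorem ch_flow_explicit_solution (lam β₀ γ₀ δ₀ m₀ η : ℝ) (hlam : lam ≠ 0) :
    chX lam β₀ γ₀ δ₀ η 0 = η ∧
    chM lam β₀ γ₀ δ₀ m₀ 0 = m₀ ∧
    chGamma lam β₀ γ₀ δ₀ 0 = γ₀ ∧
    chDelta lam β₀ γ₀ δ₀ 0 = δ₀ ∧
    chBeta lam β₀ 0 = β₀ ∧
    ∀ ξ : ℝ, chA lam β₀ ξ ≠ 0 →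
      0 < chDp lam β₀ γ₀ δ₀ ξ * chDm lam β₀ γ₀ δ₀ ξ →
      (HasDerivAt (chX lam β₀ γ₀ δ₀ η)
          (-(Real.exp (chDelta lam β₀ γ₀ δ₀ ξ / lam))) ξ ∧
       HasDerivAt (chM lam β₀ γ₀ δ₀ m₀)
          (2 / lam * chGamma lam β₀ γ₀ δ₀ ξ
            * Real.exp (chDelta lam β₀ γ₀ δ₀ ξ / lam) * chM lam β₀ γ₀ δ₀ m₀ ξ) ξ ∧
       HasDerivAt (chGamma lam β₀ γ₀ δ₀)
          (-(1 / (2 * lam)) * Real.exp (chDelta lam β₀ γ₀ δ₀ ξ / lam)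
            * (lam ^ 2 - (chGamma lam β₀ γ₀ δ₀ ξ) ^ 2)) ξ ∧
       HasDerivAt (chDelta lam β₀ γ₀ δ₀)
          (chBeta lam β₀ ξ - chGamma lam β₀ γ₀ δ₀ ξ
            * Real.exp (chDelta lam β₀ γ₀ δ₀ ξ / lam)) ξ ∧
       HasDerivAt (chBeta lam β₀) (1 / (2 * lam) * (chBeta lam β₀ ξ) ^ 2) ξ) := by
  have hE : (0:ℝ) < Real.exp (δ₀ / lam) := Real.exp_pos _
  have h2l : (2:ℝ) * lam ≠ 0 := mul_ne_zero two_ne_zero hlam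
  refine ⟨?_, ?_, ?_, ?_, ?_, ?_⟩
  · simp [chX, chDm, chDp, chA, div_self h2l]
  · simp only [chM, chDm, chDp, chA]
    norm_num
    field_simp
  · simp [chGamma]
  · have h0 : chDp lam β₀ γ₀ δ₀ 0 = 2 * lam := by simp [chDp, chA]
    have h1 : chDm lam β₀ γ₀ δ₀ 0 = 2 * lam := by simp [chDm, chA]
    have h4 : 4 * lam ^ 2 * Real.exp (δ₀ / lam) / (2 * lam * (2 * lam))
        = Real.exp (δ₀ / lam) := by field_simp; ring
    unfold chDelta
    rw [h0, h1, h4, abs_of_pos hE, Real.log_exp]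
    field_simp
  · simp only [chBeta, chA]
    norm_num
    field_simp
  · intro ξ hA hpos
    have hprod : chDp lam β₀ γ₀ δ₀ ξ * chDm lam β₀ γ₀ δ₀ ξ ≠ 0 := ne_of_gt hpos
    have hDp : chDp lam β₀ γ₀ δ₀ ξ ≠ 0 := left_ne_zero_of_mul hprod
    have hDm : chDm lam β₀ γ₀ δ₀ ξ ≠ 0 := right_ne_zero_of_mul hprod
    have hexp : Real.exp (chDelta lam β₀ γ₀ δ₀ ξ / lam)
        = 4 * lam ^ 2 * Real.exp (δ₀ / lam)
          / (chDp lam β₀ γ₀ δ₀ ξ * chDm lam β₀ γ₀ δ₀ ξ) := by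
      unfold chDelta
      rw [mul_div_cancel_left₀ _ hlam, Real.log_abs, Real.exp_log]
      exact div_pos (by positivity) hpos
    have hA0 : -ξ * β₀ + 2 * lam ≠ 0 := hA
    have hDp0 : -ξ * β₀ + 2 * lam + (γ₀ + lam) * ξ * Real.exp (δ₀ / lam) ≠ 0 := hDp
    have hDm0 : -ξ * β₀ + 2 * lam + (γ₀ - lam) * ξ * Real.exp (δ₀ / lam) ≠ 0 := hDm
    -- basic derivatives
    have hA' : HasDerivAt (chA lam β₀) (-β₀) ξ := by
      have h := ((hasDerivAt_id ξ).neg.mul_const β₀).add_const (2 * lam)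
      have e : -1 * β₀ = -β₀ := by ring
      rw [e] at h
      exact h
    have hDp' : HasDerivAt (chDp lam β₀ γ₀ δ₀)
        (-β₀ + (γ₀ + lam) * Real.exp (δ₀ / lam)) ξ := by
      have h := hA'.add
        (((hasDerivAt_id ξ).const_mul (γ₀ + lam)).mul_const (Real.exp (δ₀ / lam)))
      have e : (γ₀ + lam) * 1 * Real.exp (δ₀ / lam)
          = (γ₀ + lam) * Real.exp (δ₀ / lam) := by ring
      rw [e] at h
      exact h
    have hDm' : HasDerivAt (chDm lam β₀ γ₀ δ₀)
        (-β₀ + (γ₀ - lam) * Real.exp (δ₀ / lam)) ξ := by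
      have h := hA'.add
        (((hasDerivAt_id ξ).const_mul (γ₀ - lam)).mul_const (Real.exp (δ₀ / lam)))
      have e : (γ₀ - lam) * 1 * Real.exp (δ₀ / lam)
          = (γ₀ - lam) * Real.exp (δ₀ / lam) := by ring
      rw [e] at h
      exact h
    refine ⟨?_, ?_, ?_, ?_, ?_⟩
    · -- X
      have hfun : chX lam β₀ γ₀ δ₀ η
          = fun x => η + Real.log (chDm lam β₀ γ₀ δ₀ x / chDp lam β₀ γ₀ δ₀ x) := by
        funext x; simp [chX, Real.log_abs]
      rw [hfun]
      have h := ((hDm'.div hDp' hDp).log (div_ne_zero hDm hDp)).const_add η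
      refine h.congr_deriv ?_
      symm
      simp only [Pi.div_apply, Pi.pow_apply, Pi.mul_apply, id]
      rw [hexp]
      field_simp
      simp only [chDp, chDm, chA]
      field_simp
      ring
    · -- m
      have h := (((hDm'.pow 2).const_mul m₀).mul (hDp'.pow 2)).div (hA'.pow 4)
        (pow_ne_zero 4 hA)
      have hfun : chM lam β₀ γ₀ δ₀ m₀
          = fun x => m₀ * chDm lam β₀ γ₀ δ₀ x ^ 2 * chDp lam β₀ γ₀ δ₀ x ^ 2
              / chA lam β₀ x ^ 4 := rfl
      rw [hfun]
      refine h.congr_deriv ?_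
      symm
      simp only [Pi.div_apply, Pi.pow_apply, Pi.mul_apply, id]
      rw [hexp]
      field_simp
      simp only [chGamma, chM]
      field_simp
      simp only [chDp, chDm, chA]
      field_simp
      ring
    · -- γ
      have h := ((((hasDerivAt_id ξ).mul_const (γ₀ ^ 2 - lam ^ 2)).mul_const
        (Real.exp (δ₀ / lam))).div hA' hA).const_add γ₀
      have hfun : chGamma lam β₀ γ₀ δ₀
          = fun x => γ₀ + x * (γ₀ ^ 2 - lam ^ 2) * Real.exp (δ₀ / lam)
              / chA lam β₀ x := rfl
      rw [hfun]
      refine h.congr_deriv ?_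
      symm
      simp only [Pi.div_apply, Pi.pow_apply, Pi.mul_apply, id]
      rw [hexp]
      field_simp
      simp only [chDp, chDm, chA]
      field_simp
      ring
    · -- δ
      have hprodne := hprod
      have hqne : 4 * lam ^ 2 * Real.exp (δ₀ / lam)
          / (chDp lam β₀ γ₀ δ₀ ξ * chDm lam β₀ γ₀ δ₀ ξ) ≠ 0 :=
        ne_of_gt (div_pos (by positivity) hpos)
      have h := (((hasDerivAt_const ξ (4 * lam ^ 2 * Real.exp (δ₀ / lam))).div
        (hDp'.mul hDm') hprodne).log hqne).const_mul lam
      have hfun : chDelta lam β₀ γ₀ δ₀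
          = fun x => lam * Real.log (4 * lam ^ 2 * Real.exp (δ₀ / lam)
              / (chDp lam β₀ γ₀ δ₀ x * chDm lam β₀ γ₀ δ₀ x)) := by
        funext x; simp [chDelta, Real.log_abs]
      rw [hexp, hfun]
      refine h.congr_deriv ?_
      symm
      simp only [Pi.div_apply, Pi.pow_apply, Pi.mul_apply, id]
      field_simp
      simp only [chBeta, chGamma]
      field_simp
      simp only [chDp, chDm, chA]
      field_simp
      ring
    · -- β
      have h := (hasDerivAt_const ξ (2 * lam * β₀)).div hA' hA
      have hfun : chBeta lam β₀ = fun x => 2 * lam * β₀ / chA lam β₀ x := rfl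
      rw [hfun]
      refine h.congr_deriv ?_
      symm
      simp only [chBeta]
      field_simp
      ring
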